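/- arXiv:2508.14524 — 3 statements merged into one kernel-verified Lean document; each statement's English description precedes it below -/
import Mathlib

section
/- Conversely, if w equals the maximum absolute value over all contiguous partial sums of the signed transaction sequence (d_1, ..., d_n), then there exists an initial nonnegative split (b_v, b_u) with b_v + b_u = w such that every transaction in the sequence can be accepted while keeping both balances nonnegative. -/
open Finset

/-- If `w` equals the maximum absolute value over all contiguous partial sums of
the signed transaction sequence `d_1, …, d_n`, then there is an initial
nonnegative split `(b_v, b_u)` with `b_v + b_u = w` such that every transaction
can be accepted while keeping both balances nonnegative. -/
theorem capacity_upper_bound_feasible (n : ℕ) (d : ℕ → ℝ) (w : ℝ)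
    (hw : w = (Finset.range (n + 1) ×ˢ Finset.range (n + 1)).sup'
      ((Finset.nonempty_range_iff.mpr (Nat.succ_ne_zero n)).product
        (Finset.nonempty_range_iff.mpr (Nat.succ_ne_zero n)))
      (fun p => if p.1 ≤ p.2 then |∑ i ∈ Finset.Ico p.1 p.2, d i| else 0)) :
    ∃ bv bu : ℝ, 0 ≤ bv ∧ 0 ≤ bu ∧ bv + bu = w ∧
      ∀ j ≤ n, 0 ≤ bv + ∑ i ∈ Finset.range j, d i ∧
        bv + ∑ i ∈ Finset.range j, d i ≤ w := by
  set S : ℕ → ℝ := fun j => ∑ i ∈ Finset.range j, d i with hS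
  have hne : (Finset.range (n + 1)).Nonempty :=
    Finset.nonempty_range_iff.mpr (Nat.succ_ne_zero n)
  -- key: for k, j ≤ n, S j - S k ≤ w
  have key : ∀ k ≤ n, ∀ j ≤ n, S j - S k ≤ w := by
    intro k hk j hj
    rcases le_total k j with h | h
    · have hmem : (k, j) ∈ Finset.range (n + 1) ×ˢ Finset.range (n + 1) := by
        simp [Finset.mem_product, Nat.lt_succ_iff, hk, hj]
      have := Finset.le_sup' (f := fun p : ℕ × ℕ =>
        if p.1 ≤ p.2 then |∑ i ∈ Finset.Ico p.1 p.2, d i| else 0) hmem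
      rw [if_pos h] at this
      have hsum : S j - S k = ∑ i ∈ Finset.Ico k j, d i := by
        rw [hS]; simp [Finset.sum_Ico_eq_sub _ h]
      calc S j - S k = ∑ i ∈ Finset.Ico k j, d i := hsum
        _ ≤ |∑ i ∈ Finset.Ico k j, d i| := le_abs_self _
        _ ≤ w := by rw [hw]; exact this
    · have hmem : (j, k) ∈ Finset.range (n + 1) ×ˢ Finset.range (n + 1) := by
        simp [Finset.mem_product, Nat.lt_succ_iff, hk, hj]
      have := Finset.le_sup' (f := fun p : ℕ × ℕ =>
        if p.1 ≤ p.2 then |∑ i ∈ Finset.Ico p.1 p.2, d i| else 0) hmem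
      rw [if_pos h] at this
      have hsum : S k - S j = ∑ i ∈ Finset.Ico j k, d i := by
        rw [hS]; simp [Finset.sum_Ico_eq_sub _ h]
      calc S j - S k = -(S k - S j) := by ring
        _ ≤ |S k - S j| := neg_le_abs _
        _ = |∑ i ∈ Finset.Ico j k, d i| := by rw [hsum]
        _ ≤ w := by rw [hw]; exact this
  set bv : ℝ := (Finset.range (n + 1)).sup' hne (fun j => -S j) with hbv
  obtain ⟨k, hkmem, hkeq⟩ := Finset.exists_mem_eq_sup' hne (fun j => -S j)
  have hkn : k ≤ n := Nat.lt_succ_iff.mp (Finset.mem_range.mp hkmem)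
  have hbvk : bv = -S k := hkeq
  have hbv_ge : ∀ j ≤ n, -S j ≤ bv := by
    intro j hj
    exact Finset.le_sup' (fun j => -S j) (Finset.mem_range.mpr (Nat.lt_succ_iff.mpr hj))
  have h0 : S 0 = 0 := by simp [hS]
  have hbv0 : 0 ≤ bv := by
    have := hbv_ge 0 (Nat.zero_le n); rw [h0] at this; simpa using this
  have hbvw : bv ≤ w := by
    have := key k hkn 0 (Nat.zero_le n)
    rw [hbvk]; rw [h0] at this; linarith
  refine ⟨bv, w - bv, hbv0, by linarith, by ring, ?_⟩
  intro j hj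
  constructor
  · have := hbv_ge j hj; linarith
  · have := key k hkn j hj; rw [hbvk]; linarith
end

section
/- For any connected graph G' of diameter d on vertex set V and any graph G on V, the minimal total capacity needed to accept all transactions of a given sequence when routing in G' is at most d times the minimal total capacity needed when routing in G; formally AC(S, G') ≤ d · AC(S, G). -/
open Finset

/-- A feasible solution accepting *all* transactions of the sequence
`(src i, tgt i, amt i)` for `i < n`, routed in the graph `H`: capacities on
channels (edges of `H`), a routing walk for each transaction, and an evolution
of balances that stays nonnegative, where each hop of the walk of transaction
`i` moves `amt i` from the forwarding side to the other side. -/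
structure ACSolution {V : Type} [Fintype V] [DecidableEq V] (H : SimpleGraph V)
    (n : ℕ) (src tgt : ℕ → V) (amt : ℕ → ℝ) where
  cap : V → V → ℝ
  cap_symm : ∀ u v, cap u v = cap v u
  cap_nonneg : ∀ u v, 0 ≤ cap u v
  cap_support : ∀ u v, ¬ H.Adj u v → cap u v = 0
  walk : ∀ i : ℕ, H.Walk (src i) (tgt i)
  bal : ℕ → V → V → ℝ
  bal_nonneg : ∀ i u v, 0 ≤ bal i u v
  bal_cap : ∀ i u v, bal i u v + bal i v u = cap u v
  bal_step : ∀ i < n, ∀ u v : V,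
    bal (i + 1) u v = bal i u v
      - amt i * (((walk i).darts.filter (fun dd => dd.toProd = (u, v))).length : ℝ)
      + amt i * (((walk i).darts.filter (fun dd => dd.toProd = (v, u))).length : ℝ)

/-- `AC(S, H)`: the minimal total capacity needed to accept all transactions
when routing in `H` (`⊤` if no feasible solution exists). -/
noncomputable def ACcost {V : Type} [Fintype V] [DecidableEq V] (H : SimpleGraph V)
    (n : ℕ) (src tgt : ℕ → V) (amt : ℕ → ℝ) : ENNReal :=
  ⨅ sol : ACSolution H n src tgt amt,
    ENNReal.ofReal ((∑ u : V, ∑ v : V, sol.cap u v) / 2)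

section ACaux

open SimpleGraph

variable {V : Type} [DecidableEq V] {G G' : SimpleGraph V}

/-- Transform a `G`-walk to a `G'`-walk by replacing each dart `(u,v)` by `p u v`. -/
def ACtrans (p : ∀ u v : V, G'.Walk u v) : ∀ {u v : V}, G.Walk u v → G'.Walk u v
  | _, _, SimpleGraph.Walk.nil => SimpleGraph.Walk.nil
  | _, _, SimpleGraph.Walk.cons _ w => ((p _ _).append (ACtrans p w))

lemma ACtrans_darts (p : ∀ u v : V, G'.Walk u v) {u v : V} (w : G.Walk u v) :
    (ACtrans p w).darts = w.darts.flatMap (fun dd => (p dd.fst dd.snd).darts) := by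
  induction w with
  | nil => simp [ACtrans]
  | cons h w ih => simp [ACtrans, Walk.darts_append, ih]

lemma ACfilter_flatMap_length {α β : Type*} (l : List α) (F : α → List β) (p : β → Bool) :
    ((l.flatMap F).filter p).length = (l.map (fun x => ((F x).filter p).length)).sum := by
  induction l with
  | nil => simp
  | cons x l ih => simp [List.filter_append, ih]

lemma ACsum_over_darts [Fintype V] {H : SimpleGraph V} (l : List H.Dart) (g : V → V → ℕ) :
    (l.map (fun dd => g dd.fst dd.snd)).sum
      = ∑ u : V, ∑ v : V, ((l.filter (fun dd => dd.toProd = (u, v))).length) * g u v := by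
  induction l with
  | nil => simp
  | cons dd l ih =>
    have key : ∀ x : V × V,
        (((dd :: l).filter (fun e => e.toProd = (x.1, x.2))).length) * g x.1 x.2
          = ((l.filter (fun e => e.toProd = (x.1, x.2))).length) * g x.1 x.2
            + (if dd.toProd = x then g x.1 x.2 else 0) := by
      intro x
      by_cases h : dd.toProd = x
      · rw [List.filter_cons_of_pos (by simp [h, Prod.ext_iff]), if_pos h]
        simp [List.length_cons, Nat.succ_mul]
      · rw [List.filter_cons_of_neg (by simp [h, ← Prod.ext_iff]), if_neg h]
        simp
    rw [List.map_cons, List.sum_cons, ih, ← Finset.sum_product', ← Finset.sum_product',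
      Finset.sum_congr rfl (fun x _ => key x), Finset.sum_add_distrib, Finset.sum_ite_eq]
    simp [add_comm]

lemma ACcount_reverse {H : SimpleGraph V} {u v : V} (w : H.Walk u v) (a b : V) :
    ((w.reverse.darts.filter (fun dd => dd.toProd = (a, b))).length)
      = ((w.darts.filter (fun dd => dd.toProd = (b, a))).length) := by
  rw [Walk.darts_reverse, List.filter_reverse, List.length_reverse, List.filter_map,
    List.length_map]
  congr 1
  apply List.filter_congr
  intro dd _
  simp only [Function.comp, decide_eq_decide]
  constructor
  · intro h
    have := congrArg Prod.swap h
    simpa [Dart.symm] using this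
  · intro h
    simp [Dart.symm, h]

lemma ACcount_not_adj {H : SimpleGraph V} {u v : V} (w : H.Walk u v) (a b : V)
    (h : ¬ H.Adj a b) :
    ((w.darts.filter (fun dd => dd.toProd = (a, b))).length) = 0 := by
  rw [List.length_eq_zero_iff, List.filter_eq_nil_iff]
  intro dd _
  simp only [decide_eq_true_eq]
  intro hdd
  have hadj := dd.adj
  rw [hdd] at hadj
  exact h hadj

lemma ACsum4_swap {α : Type} [Fintype α] (F : α → α → α → α → ℝ) :
    ∑ a : α, ∑ b : α, ∑ u : α, ∑ v : α, F a b u v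
      = ∑ u : α, ∑ v : α, ∑ a : α, ∑ b : α, F a b u v := by
  rw [show (∑ a : α, ∑ b : α, ∑ u : α, ∑ v : α, F a b u v)
      = ∑ x : α × α, ∑ y : α × α, F x.1 x.2 y.1 y.2 by
    rw [Fintype.sum_prod_type]
    exact Finset.sum_congr rfl fun a _ =>
      Finset.sum_congr rfl fun b _ =>
        (Fintype.sum_prod_type (f := fun x : α × α => F a b x.1 x.2)).symm]
  rw [show (∑ u : α, ∑ v : α, ∑ a : α, ∑ b : α, F a b u v)
      = ∑ y : α × α, ∑ x : α × α, F x.1 x.2 y.1 y.2 by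
    rw [Fintype.sum_prod_type]
    exact Finset.sum_congr rfl fun a _ =>
      Finset.sum_congr rfl fun b _ =>
        (Fintype.sum_prod_type (f := fun x : α × α => F x.1 x.2 a b)).symm]
  exact Finset.sum_comm

/-- Number of darts `(a, b)` on the chosen walk from `u` to `v`. -/
def ACN (q : ∀ u v : V, G'.Walk u v) (u v a b : V) : ℕ :=
  ((q u v).darts.filter (fun dd => dd.toProd = (a, b))).length

end ACaux

/-- For any graph `G` on `V` and any graph `G'` of diameter at most `d`
(every two vertices are joined by a walk of length at most `d`), the minimal
total capacity accepting all transactions in `G'` is at most `d` times the one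
in `G`: `AC(S, G') ≤ d · AC(S, G)`. -/
theorem ACcost_le_diam_mul {V : Type} [Fintype V] [DecidableEq V]
    (G G' : SimpleGraph V) (d : ℕ) (n : ℕ) (src tgt : ℕ → V) (amt : ℕ → ℝ)
    (hamt : ∀ i < n, 0 < amt i)
    (hdiam : ∀ u v : V, ∃ p : G'.Walk u v, p.length ≤ d) :
    ACcost G' n src tgt amt ≤ (d : ENNReal) * ACcost G n src tgt amt := by
  classical
  letI : LinearOrder V := LinearOrder.lift' (Fintype.equivFin V) (Fintype.equivFin V).injective
  -- choose a symmetric family of short walks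
  obtain ⟨q, hqlen, hNsymm⟩ :
      ∃ q : ∀ u v : V, G'.Walk u v,
        (∀ u v, (q u v).length ≤ d) ∧
        (∀ u v a b : V, ACN q v u b a = ACN q u v a b) := by
    have hp0 : ∀ u v : V, ((hdiam u v).choose).length ≤ d := fun u v => (hdiam u v).choose_spec
    refine ⟨fun u v =>
      if h : u < v then (hdiam u v).choose
      else if h' : v < u then ((hdiam v u).choose).reverse
      else (SimpleGraph.Walk.nil (u := u)).copy rfl (le_antisymm (not_lt.1 h') (not_lt.1 h)),
      ?_, ?_⟩
    · intro u v
      dsimp only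
      by_cases h : u < v
      · rw [dif_pos h]; exact hp0 u v
      · by_cases h' : v < u
        · rw [dif_neg h, dif_pos h', SimpleGraph.Walk.length_reverse]; exact hp0 v u
        · rw [dif_neg h, dif_neg h']; simp
    · intro u v a b
      rcases lt_trichotomy u v with h | h | h
      · unfold ACN
        dsimp only
        rw [dif_pos h, dif_neg (asymm h), dif_pos h]
        exact ACcount_reverse _ b a
      · subst h
        unfold ACN
        dsimp only
        rw [dif_neg (lt_irrefl u), dif_neg (lt_irrefl u)]
        simp [SimpleGraph.Walk.darts_copy]
      · unfold ACN
        dsimp only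
        rw [dif_pos h, dif_neg (asymm h), dif_pos h]
        exact (ACcount_reverse _ a b).symm
  have hNsum : ∀ u v : V, (∑ a : V, ∑ b : V, ACN q u v a b) = (q u v).length := by
    intro u v
    have h := ACsum_over_darts (q u v).darts (fun _ _ => 1)
    simp only [mul_one] at h
    unfold ACN
    rw [← h]
    simp [SimpleGraph.Walk.length_darts]
  -- handle the degenerate cases
  rcases isEmpty_or_nonempty (ACSolution G n src tgt amt) with he | hne
  · rcases Nat.eq_zero_or_pos d with rfl | hd
    · -- d = 0 : there is a zero-cost solution in G'
      refine le_trans (iInf_le _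
        ⟨fun _ _ => 0, fun _ _ => rfl, fun _ _ => le_refl 0, fun _ _ _ => rfl,
          fun i => q (src i) (tgt i), fun _ _ _ => 0, fun _ _ _ => le_refl 0,
          fun _ _ _ => by simp,
          fun i _ u v => by
            have hd0 : (q (src i) (tgt i)).darts = [] := by
              rw [← List.length_eq_zero_iff, SimpleGraph.Walk.length_darts]
              exact Nat.le_zero.mp (hqlen _ _)
            simp [hd0]⟩) ?_
      simp
    · have htop : ACcost G n src tgt amt = ⊤ := by
        rw [ACcost, iInf_of_empty]
      rw [htop, ENNReal.mul_top (by exact_mod_cast hd.ne')]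
      exact le_top
  -- main case: rewrite the right-hand side
  conv_rhs => rw [ACcost]
  rw [ENNReal.mul_iInf'
    (fun h _ => absurd h (ENNReal.natCast_ne_top d)) (fun _ => hne)]
  refine le_iInf fun sol => ?_
  -- properties of the transported capacities and balances
  have hsymm : ∀ a b : V, (∑ u : V, ∑ v : V, sol.cap u v * (ACN q u v a b : ℝ))
      = ∑ u : V, ∑ v : V, sol.cap u v * (ACN q u v b a : ℝ) := by
    intro a b
    rw [Finset.sum_comm]
    refine Finset.sum_congr rfl fun u _ => Finset.sum_congr rfl fun v _ => ?_
    rw [sol.cap_symm v u, hNsymm u v b a]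
  have hnn : ∀ a b : V, (0:ℝ) ≤ ∑ u : V, ∑ v : V, sol.cap u v * (ACN q u v a b : ℝ) :=
    fun a b => Finset.sum_nonneg fun u _ => Finset.sum_nonneg fun v _ =>
      mul_nonneg (sol.cap_nonneg u v) (Nat.cast_nonneg _)
  have hsupp : ∀ a b : V, ¬ G'.Adj a b →
      (∑ u : V, ∑ v : V, sol.cap u v * (ACN q u v a b : ℝ)) = 0 := by
    intro a b h
    refine Finset.sum_eq_zero fun u _ => Finset.sum_eq_zero fun v _ => ?_
    rw [show ACN q u v a b = 0 from ACcount_not_adj _ a b h]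
    simp
  have hbnn : ∀ (i : ℕ) (a b : V),
      (0:ℝ) ≤ ∑ u : V, ∑ v : V, sol.bal i u v * (ACN q u v a b : ℝ) :=
    fun i a b => Finset.sum_nonneg fun u _ => Finset.sum_nonneg fun v _ =>
      mul_nonneg (sol.bal_nonneg i u v) (Nat.cast_nonneg _)
  have hbcap : ∀ (i : ℕ) (a b : V),
      (∑ u : V, ∑ v : V, sol.bal i u v * (ACN q u v a b : ℝ))
        + (∑ u : V, ∑ v : V, sol.bal i u v * (ACN q u v b a : ℝ))
      = ∑ u : V, ∑ v : V, sol.cap u v * (ACN q u v a b : ℝ) := by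
    intro i a b
    have h2 : (∑ u : V, ∑ v : V, sol.bal i u v * (ACN q u v b a : ℝ))
        = ∑ u : V, ∑ v : V, sol.bal i v u * (ACN q u v a b : ℝ) := by
      rw [Finset.sum_comm]
      refine Finset.sum_congr rfl fun u _ => Finset.sum_congr rfl fun v _ => ?_
      rw [hNsymm u v a b]
    rw [h2, ← Finset.sum_add_distrib]
    refine Finset.sum_congr rfl fun u _ => ?_
    rw [← Finset.sum_add_distrib]
    refine Finset.sum_congr rfl fun v _ => ?_
    rw [← add_mul, sol.bal_cap i u v]
  have hbstep : ∀ i < n, ∀ a b : V,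
      (∑ u : V, ∑ v : V, sol.bal (i + 1) u v * (ACN q u v a b : ℝ))
        = (∑ u : V, ∑ v : V, sol.bal i u v * (ACN q u v a b : ℝ))
          - amt i * ((((ACtrans q (sol.walk i)).darts.filter
              (fun dd => dd.toProd = (a, b))).length : ℝ))
          + amt i * ((((ACtrans q (sol.walk i)).darts.filter
              (fun dd => dd.toProd = (b, a))).length : ℝ)) := by
    intro i hi a b
    have hc : ∀ x y : V,
        (((ACtrans q (sol.walk i)).darts.filter (fun dd => dd.toProd = (x, y))).length)
          = ∑ u : V, ∑ v : V,
              (((sol.walk i).darts.filter (fun dd => dd.toProd = (u, v))).length)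
                * ACN q u v x y := by
      intro x y
      rw [ACtrans_darts, ACfilter_flatMap_length]
      exact ACsum_over_darts _ (fun u v => ACN q u v x y)
    rw [hc a b, hc b a]
    push_cast
    calc (∑ u : V, ∑ v : V, sol.bal (i + 1) u v * (ACN q u v a b : ℝ))
        = ∑ u : V, ∑ v : V,
            (sol.bal i u v * (ACN q u v a b : ℝ)
              - amt i * ((((sol.walk i).darts.filter
                  (fun dd => dd.toProd = (u, v))).length : ℝ) * (ACN q u v a b : ℝ))
              + amt i * ((((sol.walk i).darts.filter
                  (fun dd => dd.toProd = (v, u))).length : ℝ) * (ACN q u v a b : ℝ))) := by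
          refine Finset.sum_congr rfl fun u _ => Finset.sum_congr rfl fun v _ => ?_
          rw [sol.bal_step i hi u v]; ring
      _ = (∑ u : V, ∑ v : V, sol.bal i u v * (ACN q u v a b : ℝ))
            - amt i * (∑ u : V, ∑ v : V, (((sol.walk i).darts.filter
                  (fun dd => dd.toProd = (u, v))).length : ℝ) * (ACN q u v a b : ℝ))
            + amt i * (∑ u : V, ∑ v : V, (((sol.walk i).darts.filter
                  (fun dd => dd.toProd = (v, u))).length : ℝ) * (ACN q u v a b : ℝ)) := by
          simp only [Finset.sum_add_distrib, Finset.sum_sub_distrib, ← Finset.mul_sum]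
      _ = (∑ u : V, ∑ v : V, sol.bal i u v * (ACN q u v a b : ℝ))
            - amt i * (∑ u : V, ∑ v : V, (((sol.walk i).darts.filter
                  (fun dd => dd.toProd = (u, v))).length : ℝ) * (ACN q u v a b : ℝ))
            + amt i * (∑ u : V, ∑ v : V, (((sol.walk i).darts.filter
                  (fun dd => dd.toProd = (u, v))).length : ℝ) * (ACN q u v b a : ℝ)) := by
          congr 1
          rw [Finset.sum_comm]
          refine congrArg _ (Finset.sum_congr rfl fun u _ =>
            Finset.sum_congr rfl fun v _ => ?_)
          rw [hNsymm u v b a]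
  -- assemble the solution and conclude
  refine le_trans (iInf_le _
    ⟨fun a b => ∑ u : V, ∑ v : V, sol.cap u v * (ACN q u v a b : ℝ), hsymm, hnn, hsupp,
      fun i => ACtrans q (sol.walk i),
      fun i a b => ∑ u : V, ∑ v : V, sol.bal i u v * (ACN q u v a b : ℝ),
      hbnn, hbcap, hbstep⟩) ?_
  -- cost bound
  have hb : (∑ a : V, ∑ b : V, ∑ u : V, ∑ v : V, sol.cap u v * (ACN q u v a b : ℝ))
      ≤ (d : ℝ) * (∑ u : V, ∑ v : V, sol.cap u v) := by
    rw [ACsum4_swap (fun a b u v => sol.cap u v * (ACN q u v a b : ℝ)), Finset.mul_sum]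
    refine Finset.sum_le_sum fun u _ => ?_
    rw [Finset.mul_sum]
    refine Finset.sum_le_sum fun v _ => ?_
    have hcap : (∑ a : V, ∑ b : V, sol.cap u v * (ACN q u v a b : ℝ))
        = sol.cap u v * ((q u v).length : ℝ) := by
      simp only [← Finset.mul_sum]
      congr 1
      rw [← hNsum u v]
      push_cast
      rfl
    rw [hcap, mul_comm ((d : ℝ)) (sol.cap u v)]
    refine mul_le_mul_of_nonneg_left ?_ (sol.cap_nonneg u v)
    exact_mod_cast hqlen u v
  rw [← ENNReal.ofReal_natCast d, ← ENNReal.ofReal_mul (by positivity)]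
  apply ENNReal.ofReal_le_ofReal
  dsimp only
  linarith [hb]
end

section
/- For any graph G on p ≥ 2 nodes and any transaction sequence S, the star K_{1,p-1} satisfies AC(S, K_{1,p-1}) ≤ 2 · AC(S, G); i.e., the star topology is a 2-approximation of the optimal capacity cost when all transactions must be accepted. -/
open Finset

/-- The star graph with centre `c`: every other node is adjacent exactly to `c`. -/
def starGraph {V : Type} [DecidableEq V] (c : V) : SimpleGraph V where
  Adj u v := u ≠ v ∧ (u = c ∨ v = c)
  symm := ⟨fun _ _ h => ⟨h.1.symm, h.2.symm⟩⟩
  loopless := ⟨fun _ h => h.1 rfl⟩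

section Aux

variable {V : Type} [Fintype V] [DecidableEq V]

lemma len_filter_cons {α : Type*} (p : α → Bool) (d : α) (l : List α) :
    ((List.filter p (d :: l)).length : ℝ)
      = (if p d then 1 else 0) + ((List.filter p l).length : ℝ) := by
  rw [List.filter_cons]; split_ifs <;> simp [add_comm]

lemma sum_cnt_snd {H : SimpleGraph V} (l : List H.Dart) (u : V) :
    ∑ v : V, ((l.filter fun d => d.toProd = (v, u)).length : ℝ)
      = ((l.filter fun d => d.toProd.2 = u).length : ℝ) := by
  induction l with
  | nil => simp
  | cons d l ih =>
    simp only [len_filter_cons, decide_eq_true_eq]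
    rw [Finset.sum_add_distrib, ih]
    congr 1
    by_cases hd : d.toProd.2 = u
    · rw [if_pos hd, Finset.sum_eq_single d.toProd.1]
      · simp [Prod.ext_iff, hd]
      · intro v _ hv
        rw [if_neg]
        intro h; exact hv (by rw [h])
      · simp
    · rw [if_neg hd]
      apply Finset.sum_eq_zero
      intro v _
      rw [if_neg]
      intro h; exact hd (by rw [h])

lemma sum_cnt_fst {H : SimpleGraph V} (l : List H.Dart) (u : V) :
    ∑ v : V, ((l.filter fun d => d.toProd = (u, v)).length : ℝ)
      = ((l.filter fun d => d.toProd.1 = u).length : ℝ) := by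
  induction l with
  | nil => simp
  | cons d l ih =>
    simp only [len_filter_cons, decide_eq_true_eq]
    rw [Finset.sum_add_distrib, ih]
    congr 1
    by_cases hd : d.toProd.1 = u
    · rw [if_pos hd, Finset.sum_eq_single d.toProd.2]
      · simp [Prod.ext_iff, hd]
      · intro v _ hv
        rw [if_neg]
        intro h; exact hv (by rw [h])
      · simp
    · rw [if_neg hd]
      apply Finset.sum_eq_zero
      intro v _
      rw [if_neg]
      intro h; exact hd (by rw [h])

omit [Fintype V] in
lemma flow_conserve {H : SimpleGraph V} : ∀ {s t : V} (w : H.Walk s t) (u : V),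
    ((w.darts.filter fun d => d.toProd.2 = u).length : ℝ)
      - ((w.darts.filter fun d => d.toProd.1 = u).length : ℝ)
      = (if u = t then 1 else 0) - (if u = s then 1 else 0) := by
  intro s t w
  induction w with
  | nil => simp
  | @cons s x t h p ih =>
    intro u
    have E := ih u
    simp only [SimpleGraph.Walk.darts_cons, len_filter_cons, decide_eq_true_eq]
    have h1 : (if x = u then (1:ℝ) else 0) = if u = x then 1 else 0 := by
      simp [eq_comm]
    have h2 : (if s = u then (1:ℝ) else 0) = if u = s then 1 else 0 := by
      simp [eq_comm]
    rw [h1, h2]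
    linarith [E]

omit [Fintype V] in
lemma star_filter_snd {c : V} (l : List (starGraph c).Dart) (u : V) (hu : u ≠ c) :
    l.filter (fun d => d.toProd = (c, u)) = l.filter (fun d => d.toProd.2 = u) := by
  apply List.filter_congr
  intro d _
  obtain ⟨hne, hc⟩ := d.adj
  simp only [decide_eq_decide]
  constructor
  · intro h; rw [h]
  · intro h
    have h1 : d.toProd.1 = c := by
      rcases hc with h' | h'
      · exact h'
      · exact (hu (h.symm.trans h')).elim
    exact Prod.ext h1 h

omit [Fintype V] in
lemma star_filter_fst {c : V} (l : List (starGraph c).Dart) (u : V) (hu : u ≠ c) :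
    l.filter (fun d => d.toProd = (u, c)) = l.filter (fun d => d.toProd.1 = u) := by
  apply List.filter_congr
  intro d _
  obtain ⟨hne, hc⟩ := d.adj
  simp only [decide_eq_decide]
  constructor
  · intro h; rw [h]
  · intro h
    have h2 : d.toProd.2 = c := by
      rcases hc with h' | h'
      · exact (hu (h.symm.trans h')).elim
      · exact h'
    exact Prod.ext h h2

omit [Fintype V] in
lemma star_filter_nil {c : V} (l : List (starGraph c).Dart) (u v : V)
    (huv : (u ≠ c ∧ v ≠ c) ∨ u = v) :
    l.filter (fun d => d.toProd = (u, v)) = [] := by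
  rw [List.filter_eq_nil_iff]
  intro d _
  obtain ⟨hne, hc⟩ := d.adj
  simp only [decide_eq_true_eq]
  intro h
  have h1 : d.toProd.1 = u := by rw [h]
  have h2 : d.toProd.2 = v := by rw [h]
  rcases huv with ⟨hu, hv⟩ | rfl
  · rcases hc with h' | h'
    · exact hu (h1.symm.trans h')
    · exact hv (h2.symm.trans h')
  · exact hne (h1.trans h2.symm)

omit [Fintype V] in
/-- walk from u to the centre -/
def toCenter (c u : V) : (starGraph c).Walk u c :=
  if h : u = c then (SimpleGraph.Walk.nil : (starGraph c).Walk c c).copy h.symm rfl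
  else SimpleGraph.Walk.cons ⟨h, Or.inr rfl⟩ SimpleGraph.Walk.nil

/-- Transport a solution in `G` to a solution in the star with centre `c`. -/
noncomputable def starSol (c : V) {G : SimpleGraph V} {n : ℕ} {src tgt : ℕ → V}
    {amt : ℕ → ℝ} (sol : ACSolution G n src tgt amt) :
    ACSolution (starGraph c) n src tgt amt where
  cap u v := (if u ≠ c ∧ v = c then ∑ w, sol.cap u w else 0)
           + (if u = c ∧ v ≠ c then ∑ w, sol.cap v w else 0)
  cap_symm u v := by
    by_cases hu : u = c <;> by_cases hv : v = c <;> simp [hu, hv]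
  cap_nonneg u v := by
    have hA : ∀ x : V, (0:ℝ) ≤ ∑ w, sol.cap x w :=
      fun x => Finset.sum_nonneg fun w _ => sol.cap_nonneg x w
    apply add_nonneg <;> · split_ifs with h
                           · first | exact hA u | exact hA v
                           · exact le_refl 0
  cap_support u v h := by
    have h' : ¬(u ≠ v ∧ (u = c ∨ v = c)) := h
    rw [if_neg (fun hh : u ≠ c ∧ v = c =>
          h' ⟨fun e => hh.1 (e.trans hh.2), Or.inr hh.2⟩),
        if_neg (fun hh : u = c ∧ v ≠ c =>
          h' ⟨fun e => hh.2 (e.symm.trans hh.1), Or.inl hh.1⟩), add_zero]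
  walk i := (toCenter c (src i)).append (toCenter c (tgt i)).reverse
  bal i u v := (if u ≠ c ∧ v = c then ∑ w, sol.bal i u w else 0)
             + (if u = c ∧ v ≠ c then ∑ w, sol.bal i w v else 0)
  bal_nonneg i u v := by
    apply add_nonneg <;> · split_ifs with h
                           · exact Finset.sum_nonneg fun w _ => sol.bal_nonneg _ _ _
                           · exact le_refl 0
  bal_cap i u v := by
    by_cases hu : u = c <;> by_cases hv : v = c <;>
      simp [hu, hv, ← Finset.sum_add_distrib, sol.bal_cap, add_comm]
  bal_step i hi u v := by
    by_cases hu : u = c <;> by_cases hv : v = c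
    · -- u = c, v = c : everything vanishes
      rw [hu, hv]
      simp [star_filter_nil _ _ _ (Or.inr rfl)]
    · -- u = c, v ≠ c
      rw [hu]
      have E1 := flow_conserve (sol.walk i) v
      have E2 := flow_conserve
        ((toCenter c (src i)).append (toCenter c (tgt i)).reverse) v
      have hc1 : ∀ r : ℝ, (if c ≠ c ∧ v = c then r else 0) = 0 :=
        fun r => if_neg (fun hh => hh.1 rfl)
      have hc2 : ∀ r : ℝ, (if c = c ∧ v ≠ c then r else 0) = r :=
        fun r => if_pos ⟨rfl, hv⟩
      simp only [hc1, hc2, zero_add, add_zero, ne_eq, hv, not_false_eq_true, true_and, and_true, if_true, ite_true, not_true, and_false, false_and, if_false, ite_false]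
      rw [star_filter_snd _ v hv, star_filter_fst _ v hv]
      rw [Finset.sum_congr rfl (fun w _ => sol.bal_step i hi w v)]
      rw [Finset.sum_add_distrib, Finset.sum_sub_distrib,
        ← Finset.mul_sum, ← Finset.mul_sum, sum_cnt_snd, sum_cnt_fst]
      linear_combination (amt i) * E2 - (amt i) * E1
    · -- u ≠ c, v = c
      rw [hv]
      have E1 := flow_conserve (sol.walk i) u
      have E2 := flow_conserve
        ((toCenter c (src i)).append (toCenter c (tgt i)).reverse) u
      have hc1 : ∀ r : ℝ, (if u ≠ c ∧ c = c then r else 0) = r :=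
        fun r => if_pos ⟨hu, rfl⟩
      have hc2 : ∀ r : ℝ, (if u = c ∧ c ≠ c then r else 0) = 0 :=
        fun r => if_neg (fun hh => hh.2 rfl)
      simp only [hc1, hc2, zero_add, add_zero, ne_eq, hu, not_false_eq_true, true_and, and_true, if_true, ite_true, not_true, and_false, false_and, if_false, ite_false]
      rw [star_filter_fst _ u hu, star_filter_snd _ u hu]
      rw [Finset.sum_congr rfl (fun w _ => sol.bal_step i hi u w)]
      rw [Finset.sum_add_distrib, Finset.sum_sub_distrib,
        ← Finset.mul_sum, ← Finset.mul_sum, sum_cnt_fst, sum_cnt_snd]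
      linear_combination (amt i) * E1 - (amt i) * E2
    · -- u ≠ c, v ≠ c
      simp [hu, hv, star_filter_nil _ _ _ (Or.inl ⟨hu, hv⟩),
        star_filter_nil _ _ _ (Or.inl ⟨hv, hu⟩)]


/-- For any graph `G` on `p ≥ 2` nodes, the star `K_{1,p-1}` is a
2-approximation of the optimal capacity cost when all transactions must be
accepted: `AC(S, K_{1,p-1}) ≤ 2 · AC(S, G)`. -/
theorem ACcost_star_le_two_mul {V : Type} [Fintype V] [DecidableEq V]
    (hp : 2 ≤ Fintype.card V) (c : V) (G : SimpleGraph V)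
    (n : ℕ) (src tgt : ℕ → V) (amt : ℕ → ℝ) (hamt : ∀ i < n, 0 < amt i) :
    ACcost (starGraph c) n src tgt amt ≤ 2 * ACcost G n src tgt amt := by
  unfold ACcost
  rw [ENNReal.mul_iInf_of_ne (by norm_num) (by norm_num)]
  refine le_iInf fun sol => ?_
  refine (iInf_le _ (starSol c sol)).trans ?_
  set S := ∑ u : V, ∑ v : V, sol.cap u v with hSdef
  have hA : ∀ x : V, (0:ℝ) ≤ ∑ w, sol.cap x w :=
    fun x => Finset.sum_nonneg fun w _ => sol.cap_nonneg x w
  have hS : (0:ℝ) ≤ S := Finset.sum_nonneg fun u _ => hA u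
  have hbound : ∑ u : V, ∑ v : V, (starSol c sol).cap u v ≤ 2 * S := by
    have key : ∀ u v : V, (starSol c sol).cap u v
        = (if u ≠ c ∧ v = c then ∑ w, sol.cap u w else 0)
        + (if u = c ∧ v ≠ c then ∑ w, sol.cap v w else 0) := fun u v => rfl
    simp only [key]
    rw [Finset.sum_congr rfl (fun (u : V) _ => Finset.sum_add_distrib),
      Finset.sum_add_distrib]
    have t1 : ∑ u : V, ∑ v : V,
        (if u ≠ c ∧ v = c then ∑ w, sol.cap u w else 0) ≤ S := by
      apply Finset.sum_le_sum
      intro u _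
      by_cases hu : u = c
      · have hz : ∀ v : V, (if u ≠ c ∧ v = c then ∑ w, sol.cap u w else 0) = 0 :=
          fun v => if_neg (fun hh => hh.1 hu)
        simp only [hz, Finset.sum_const_zero]
        exact hA u
      · have hz : ∀ v : V, (if u ≠ c ∧ v = c then ∑ w, sol.cap u w else 0)
            = if v = c then ∑ w, sol.cap u w else 0 :=
          fun v => by by_cases hv : v = c <;> simp [hu, hv]
        rw [Finset.sum_congr rfl fun v _ => hz v, Finset.sum_ite_eq' univ c]
        simp
    have t2 : ∑ u : V, ∑ v : V,
        (if u = c ∧ v ≠ c then ∑ w, sol.cap v w else 0) ≤ S := by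
      have hz : ∀ u v : V, (if u = c ∧ v ≠ c then ∑ w, sol.cap v w else 0)
          = if u = c then (if v ≠ c then ∑ w, sol.cap v w else 0) else 0 :=
        fun u v => by by_cases hu : u = c <;> by_cases hv : v = c <;> simp [hu, hv]
      have hz2 : ∀ u : V, ∑ v : V,
          (if u = c then (if v ≠ c then ∑ w, sol.cap v w else 0) else 0)
          = if u = c then ∑ v : V, (if v ≠ c then ∑ w, sol.cap v w else 0) else 0 := by
        intro u; split_ifs <;> simp
      rw [Finset.sum_congr rfl fun u _ =>
        (Finset.sum_congr rfl fun v _ => hz u v), Finset.sum_congr rfl fun u _ => hz2 u,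
        Finset.sum_ite_eq' univ c]
      simp only [Finset.mem_univ, if_true]
      apply Finset.sum_le_sum
      intro v _
      split_ifs
      · exact le_refl _
      · exact hA v
    linarith
  have h2 : (2 : ENNReal) * ENNReal.ofReal (S / 2) = ENNReal.ofReal S := by
    rw [show (2 : ENNReal) = ENNReal.ofReal 2 by norm_num,
      ← ENNReal.ofReal_mul (by norm_num : (0:ℝ) ≤ 2)]
    congr 1
    ring
  rw [h2]
  apply ENNReal.ofReal_le_ofReal
  linarith
end Aux
end
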